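/- Let ℙ and ℚ be Borel probability measures on ℝ^m with finite second moments, mean vectors μ_ℙ, μ_ℚ and covariance matrices Σ_ℙ, Σ_ℚ. Then the squared type-2 Wasserstein distance is bounded below by the squared Bures metric: W₂²(ℙ, ℚ) ≥ ‖μ_ℙ − μ_ℚ‖² + tr( Σ_ℙ + Σ_ℚ − 2 (Σ_ℚ^{1/2} Σ_ℙ Σ_ℚ^{1/2})^{1/2} ), where M^{1/2} denotes the positive semidefinite square root of a positive semidefinite matrix M. -/

import Mathlib

open Matrix

variable {m : ℕ}

open scoped ComplexOrder in
/-- The positive semidefinite square root of a positive semidefinite matrix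
(the definition removed from Mathlib, restated with its old meaning). -/
noncomputable def Matrix.PosSemidef.sqrt {n 𝕜 : Type*} [Fintype n] [DecidableEq n] [RCLike 𝕜]
    {A : Matrix n n 𝕜} (hA : A.PosSemidef) : Matrix n n 𝕜 :=
  hA.1.eigenvectorUnitary.1 * diagonal ((↑) ∘ (√·) ∘ hA.1.eigenvalues) *
  (star hA.1.eigenvectorUnitary : Matrix n n 𝕜)

lemma Matrix.PosSemidef.sqrt_mul_self {n : Type*} [Fintype n] [DecidableEq n]
    {A : Matrix n n ℝ} (hA : A.PosSemidef) : hA.sqrt * hA.sqrt = A := by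
  have hU := Unitary.coe_star_mul_self hA.1.eigenvectorUnitary
  unfold Matrix.PosSemidef.sqrt
  conv_rhs => rw [hA.1.spectral_theorem, Unitary.conjStarAlgAut_apply]
  simp only [Matrix.mul_assoc]
  rw [← Matrix.mul_assoc _ (hA.1.eigenvectorUnitary : Matrix n n ℝ), hU, Matrix.one_mul,
    ← Matrix.mul_assoc (diagonal _) (diagonal _), diagonal_mul_diagonal]
  congr 3
  funext i
  simp [RCLike.ofReal_real_eq_id, Real.mul_self_sqrt (hA.eigenvalues_nonneg i)]

lemma Matrix.PosSemidef.posSemidef_sqrt {n : Type*} [Fintype n] [DecidableEq n]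
    {A : Matrix n n ℝ} (hA : A.PosSemidef) : hA.sqrt.PosSemidef := by
  unfold Matrix.PosSemidef.sqrt
  rw [Matrix.star_eq_conjTranspose]
  apply Matrix.PosSemidef.mul_mul_conjTranspose_same
  apply Matrix.PosSemidef.diagonal
  intro i
  simp [Real.sqrt_nonneg]

lemma psd_diag_nonneg {n : ℕ} {A : Matrix (Fin n) (Fin n) ℝ} (hA : A.PosSemidef) (i : Fin n) :
    0 ≤ A i i := by
  have := hA.dotProduct_mulVec_nonneg (Pi.single i 1)
  simpa [Matrix.mulVec_single, dotProduct, Pi.single_apply] using this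

lemma psd_trace_nonneg {n : ℕ} {A : Matrix (Fin n) (Fin n) ℝ} (hA : A.PosSemidef) :
    0 ≤ A.trace := by
  exact Finset.sum_nonneg fun i _ => psd_diag_nonneg hA i

lemma trace_mul_nonneg {n : ℕ} {A B : Matrix (Fin n) (Fin n) ℝ}
    (hA : A.PosSemidef) (hB : B.PosSemidef) : 0 ≤ (A * B).trace := by
  have h1 : ((hA.sqrt)ᴴ * B * hA.sqrt).PosSemidef := hB.conjTranspose_mul_mul_same hA.sqrt
  have h2 : (hA.sqrt)ᴴ = hA.sqrt := hA.posSemidef_sqrt.1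
  rw [h2] at h1
  have := psd_trace_nonneg h1
  rwa [Matrix.trace_mul_cycle, hA.sqrt_mul_self] at this


lemma exists_pinv {n : ℕ} {A : Matrix (Fin n) (Fin n) ℝ} (hA : A.PosSemidef) :
    ∃ R : Matrix (Fin n) (Fin n) ℝ, Rᵀ = R ∧ A * R = R * A ∧ (A * R) * A = A ∧
      (A * R)ᵀ = A * R ∧ (A * R) * (A * R) = A * R := by
  have hU1 : (star (hA.1.eigenvectorUnitary : Matrix (Fin n) (Fin n) ℝ)) *
      (hA.1.eigenvectorUnitary : Matrix (Fin n) (Fin n) ℝ) = 1 :=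
    (Unitary.mem_iff.mp (hA.1.eigenvectorUnitary).2).1
  set U : Matrix (Fin n) (Fin n) ℝ := (hA.1.eigenvectorUnitary : Matrix (Fin n) (Fin n) ℝ) with hUdef
  set ev : Fin n → ℝ := hA.1.eigenvalues with hev
  have hspec : A = U * Matrix.diagonal ev * star U := by
    have := hA.1.spectral_theorem
    simpa using this
  have key : ∀ f g : Fin n → ℝ, (U * Matrix.diagonal f * star U) * (U * Matrix.diagonal g * star U)
      = U * Matrix.diagonal (fun i => f i * g i) * star U := by
    intro f g
    simp only [Matrix.mul_assoc]
    rw [← Matrix.mul_assoc (star U) U, hU1, Matrix.one_mul,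
      ← Matrix.mul_assoc (Matrix.diagonal f), Matrix.diagonal_mul_diagonal]
  have herm : ∀ f : Fin n → ℝ, (U * Matrix.diagonal f * star U)ᵀ = U * Matrix.diagonal f * star U := by
    intro f
    have hs : star U = Uᵀ := by
      rw [Matrix.star_eq_conjTranspose, Matrix.conjTranspose_eq_transpose_of_trivial]
    simp [Matrix.transpose_mul, hs, Matrix.diagonal_transpose, Matrix.mul_assoc]
  refine ⟨U * Matrix.diagonal (fun i => (ev i)⁻¹) * star U, herm _, ?_, ?_, ?_, ?_⟩
  · rw [hspec, key, key]
    have h : (fun i => ev i * (ev i)⁻¹) = (fun i => (ev i)⁻¹ * ev i) := by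
      funext i; ring
    rw [h]
  · rw [hspec, key, key]
    have h : (fun i => ev i * (ev i)⁻¹ * ev i) = ev := by
      funext i
      by_cases h : ev i = 0
      · simp [h]
      · field_simp
    rw [h]
  · rw [hspec, key]
    exact herm _
  · rw [hspec, key, key]
    have h : (fun i => ev i * (ev i)⁻¹ * (ev i * (ev i)⁻¹)) = (fun i => ev i * (ev i)⁻¹) := by
      funext i
      by_cases h : ev i = 0
      · simp [h]
      · field_simp
    rw [h]

lemma eq_zero_of_forall_mul_le {c b : ℝ} (h : ∀ t : ℝ, t * c ≤ b) : c = 0 := by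
  by_contra hc
  have h1 := h ((b + 1) / c)
  rw [div_mul_cancel₀ _ hc] at h1
  linarith

lemma dotProduct_self_nonneg' {n : ℕ} (v : Fin n → ℝ) : 0 ≤ v ⬝ᵥ v :=
  Finset.sum_nonneg fun i _ => mul_self_nonneg _

lemma symdot {n : ℕ} (M : Matrix (Fin n) (Fin n) ℝ) (hM : Mᵀ = M) (v w : Fin n → ℝ) :
    (M *ᵥ v) ⬝ᵥ w = v ⬝ᵥ (M *ᵥ w) := by
  rw [Matrix.dotProduct_mulVec, ← hM, Matrix.vecMul_transpose, hM]

lemma trace_le_sqrt_trace {n : ℕ} {SP SQ C : Matrix (Fin n) (Fin n) ℝ}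
    (hSP : SP.PosSemidef) (hSQ : SQ.PosSemidef)
    (hMid : (hSQ.sqrt * SP * hSQ.sqrt).PosSemidef)
    (hq : ∀ x y : Fin n → ℝ, 2 * (x ⬝ᵥ C *ᵥ y) ≤ x ⬝ᵥ SP *ᵥ x + y ⬝ᵥ SQ *ᵥ y) :
    C.trace ≤ hMid.sqrt.trace := by
  set A := hSP.sqrt with hAdef
  set B := hSQ.sqrt with hBdef
  set N := hMid.sqrt with hNdef
  have hA2 : A * A = SP := hSP.sqrt_mul_self
  have hB2 : B * B = SQ := hSQ.sqrt_mul_self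
  have hN2 : N * N = B * SP * B := hMid.sqrt_mul_self
  have hAt : Aᵀ = A := by
    rw [← Matrix.conjTranspose_eq_transpose_of_trivial]; exact hSP.posSemidef_sqrt.1
  have hBt : Bᵀ = B := by
    rw [← Matrix.conjTranspose_eq_transpose_of_trivial]; exact hSQ.posSemidef_sqrt.1
  have hNt : Nᵀ = N := by
    rw [← Matrix.conjTranspose_eq_transpose_of_trivial]; exact hMid.posSemidef_sqrt.1
  obtain ⟨RP, hRPt, hRPc, hPA_A, hPAt, hPA2⟩ := exists_pinv hSP.posSemidef_sqrt
  obtain ⟨RQ, hRQt, hRQc, hPB_B, hPBt, hPB2⟩ := exists_pinv hSQ.posSemidef_sqrt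
  set PA := A * RP with hPAdef
  set PB := B * RQ with hPBdef
  -- A * PA = A  and  B * PB = B
  have hA_PA : A * PA = A := by
    have : (PA * A)ᵀ = Aᵀ := by rw [hPA_A]
    rw [Matrix.transpose_mul, hPAt, hAt] at this
    exact this
  have hB_PB : B * PB = B := by
    have : (PB * B)ᵀ = Bᵀ := by rw [hPB_B]
    rw [Matrix.transpose_mul, hPBt, hBt] at this
    exact this
  -- kernel conditions
  have kerP : ∀ x : Fin n → ℝ, SP *ᵥ x = 0 → ∀ y, x ⬝ᵥ C *ᵥ y = 0 := by
    intro x hx y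
    have h : ∀ t : ℝ, t * (2 * (x ⬝ᵥ C *ᵥ y)) ≤ y ⬝ᵥ SQ *ᵥ y := by
      intro t
      have h2 := hq (t • x) y
      simp only [smul_dotProduct, Matrix.mulVec_smul, hx, smul_zero,
        dotProduct_zero, smul_eq_mul, mul_zero, zero_add] at h2
      calc t * (2 * (x ⬝ᵥ C *ᵥ y)) = 2 * (t * (x ⬝ᵥ C *ᵥ y)) := by ring
        _ ≤ y ⬝ᵥ SQ *ᵥ y := h2
    have := eq_zero_of_forall_mul_le h
    linarith
  have kerQ : ∀ y : Fin n → ℝ, SQ *ᵥ y = 0 → ∀ x, x ⬝ᵥ C *ᵥ y = 0 := by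
    intro y hy x
    have h : ∀ t : ℝ, t * (2 * (x ⬝ᵥ C *ᵥ y)) ≤ x ⬝ᵥ SP *ᵥ x := by
      intro t
      have h2 := hq x (t • y)
      simp only [Matrix.mulVec_smul, dotProduct_smul, hy, smul_zero,
        dotProduct_zero, smul_eq_mul, mul_zero, add_zero] at h2
      calc t * (2 * (x ⬝ᵥ C *ᵥ y)) = 2 * (t * (x ⬝ᵥ C *ᵥ y)) := by ring
        _ ≤ x ⬝ᵥ SP *ᵥ x := h2
    have := eq_zero_of_forall_mul_le h
    linarith
  -- PA * C = C
  have hPAC : PA * C = C := by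
    have hCt : Cᵀ * (1 - PA) = 0 := by
      have hA1P : A * (1 - PA) = 0 := by
        rw [Matrix.mul_sub, Matrix.mul_one, hA_PA, sub_self]
      have hcol : ∀ v : Fin n → ℝ, Cᵀ *ᵥ ((1 - PA) *ᵥ v) = 0 := by
        intro v
        set u := (1 - PA) *ᵥ v with hu
        have hAu : A *ᵥ u = 0 := by
          rw [hu, Matrix.mulVec_mulVec, hA1P, Matrix.zero_mulVec]
        have hSPu : SP *ᵥ u = 0 := by
          rw [← hA2, ← Matrix.mulVec_mulVec, hAu, Matrix.mulVec_zero]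
        funext j
        have := kerP u hSPu (Pi.single j 1)
        simpa [Matrix.mulVec, dotProduct, Pi.single_apply, mul_comm,
          Matrix.transpose_apply] using this
      ext i j
      have := congrFun (hcol (Pi.single j 1)) i
      rw [Matrix.mulVec_mulVec] at this
      simpa [Matrix.mulVec_single] using this
    have h2 : (1 - PA) * C = 0 := by
      have := congrArg Matrix.transpose hCt
      rwa [Matrix.transpose_mul, Matrix.transpose_transpose, Matrix.transpose_sub,
        Matrix.transpose_one, hPAt, Matrix.transpose_zero] at this
    rw [Matrix.sub_mul, Matrix.one_mul] at h2
    exact (sub_eq_zero.mp h2).symm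
  -- C * PB = C
  have hCPB : C * PB = C := by
    have h2 : C * (1 - PB) = 0 := by
      have hB1P : B * (1 - PB) = 0 := by
        rw [Matrix.mul_sub, Matrix.mul_one, hB_PB, sub_self]
      have hcol : ∀ v : Fin n → ℝ, C *ᵥ ((1 - PB) *ᵥ v) = 0 := by
        intro v
        set u := (1 - PB) *ᵥ v with hu
        have hBu : B *ᵥ u = 0 := by
          rw [hu, Matrix.mulVec_mulVec, hB1P, Matrix.zero_mulVec]
        have hSQu : SQ *ᵥ u = 0 := by
          rw [← hB2, ← Matrix.mulVec_mulVec, hBu, Matrix.mulVec_zero]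
        funext i
        have := kerQ u hSQu (Pi.single i 1)
        simpa [dotProduct, Pi.single_apply] using this
      ext i j
      have := congrFun (hcol (Pi.single j 1)) i
      rw [Matrix.mulVec_mulVec] at this
      simpa [Matrix.mulVec_single] using this
    rw [Matrix.mul_sub, Matrix.mul_one] at h2
    exact (sub_eq_zero.mp h2).symm
  -- the contraction K
  set K := RP * C * RQ with hKdef
  have hAKB : A * K * B = C := by
    calc A * K * B = PA * (C * (RQ * B)) := by
          simp only [hKdef, hPAdef, Matrix.mul_assoc]
      _ = PA * (C * PB) := by rw [← hBdef] at hRQc; rw [← hRQc]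
      _ = C := by rw [← Matrix.mul_assoc, hPAC, hCPB]
  have hproj : ∀ (P : Matrix (Fin n) (Fin n) ℝ), Pᵀ = P → P * P = P →
      ∀ v : Fin n → ℝ, (P *ᵥ v) ⬝ᵥ (P *ᵥ v) ≤ v ⬝ᵥ v := by
    intro P hPt hPP v
    have e : (P *ᵥ v) ⬝ᵥ (P *ᵥ v) = v ⬝ᵥ (P *ᵥ v) := by
      rw [symdot P hPt, Matrix.mulVec_mulVec, hPP]
    have h0 : 0 ≤ (v - P *ᵥ v) ⬝ᵥ (v - P *ᵥ v) := dotProduct_self_nonneg' _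
    have hcomm : (P *ᵥ v) ⬝ᵥ v = v ⬝ᵥ (P *ᵥ v) := dotProduct_comm _ _
    rw [sub_dotProduct, dotProduct_sub, dotProduct_sub] at h0
    linarith
  have hKle : ∀ v w : Fin n → ℝ, 2 * (v ⬝ᵥ K *ᵥ w) ≤ v ⬝ᵥ v + w ⬝ᵥ w := by
    intro v w
    have hx := hq (RP *ᵥ v) (RQ *ᵥ w)
    have e1 : (RP *ᵥ v) ⬝ᵥ C *ᵥ (RQ *ᵥ w) = v ⬝ᵥ K *ᵥ w := by
      calc (RP *ᵥ v) ⬝ᵥ C *ᵥ (RQ *ᵥ w) = v ⬝ᵥ RP *ᵥ (C *ᵥ (RQ *ᵥ w)) := symdot RP hRPt v _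
        _ = v ⬝ᵥ K *ᵥ w := by
            rw [Matrix.mulVec_mulVec, Matrix.mulVec_mulVec, hKdef, Matrix.mul_assoc]
    have e2 : (RP *ᵥ v) ⬝ᵥ SP *ᵥ (RP *ᵥ v) = (PA *ᵥ v) ⬝ᵥ (PA *ᵥ v) := by
      rw [← hA2, ← Matrix.mulVec_mulVec, ← symdot A hAt, Matrix.mulVec_mulVec, ← hPAdef]
    have e3 : (RQ *ᵥ w) ⬝ᵥ SQ *ᵥ (RQ *ᵥ w) = (PB *ᵥ w) ⬝ᵥ (PB *ᵥ w) := by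
      rw [← hB2, ← Matrix.mulVec_mulVec, ← symdot B hBt, Matrix.mulVec_mulVec, ← hPBdef]
    have p1 := hproj PA hPAt hPA2 v
    have p2 := hproj PB hPBt hPB2 w
    rw [e1, e2, e3] at hx
    linarith
  have hcontr : ((1 : Matrix (Fin n) (Fin n) ℝ) - Kᵀ * K).PosSemidef := by
    refine Matrix.PosSemidef.of_dotProduct_mulVec_nonneg ?_ ?_
    · show _ᴴ = _
      rw [Matrix.conjTranspose_eq_transpose_of_trivial]
      simp [Matrix.transpose_sub, Matrix.transpose_mul, Matrix.transpose_transpose]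
    · intro x
      have hcs : (K *ᵥ x) ⬝ᵥ (K *ᵥ x) ≤ x ⬝ᵥ x := by
        have := hKle (K *ᵥ x) x
        linarith
      have hst : star x = x := by
        funext i; simp
      rw [hst, Matrix.sub_mulVec, Matrix.one_mulVec, dotProduct_sub,
        ← Matrix.mulVec_mulVec, Matrix.dotProduct_mulVec x Kᵀ, Matrix.vecMul_transpose]
      linarith
  have hZZ : (B * A) * (B * A)ᵀ = B * SP * B := by
    rw [Matrix.transpose_mul, hAt, hBt, ← hA2]
    simp only [Matrix.mul_assoc]
  have htrC : C.trace = (K * (B * A)).trace := by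
    conv_lhs => rw [← hAKB]
    rw [Matrix.trace_mul_cycle, Matrix.trace_mul_comm]
  have hmain : ∀ ε : ℝ, 0 < ε → C.trace ≤ N.trace + ε * n := by
    intro ε hε
    set T := N + ε • (1 : Matrix (Fin n) (Fin n) ℝ) with hTdef
    have hsm : (ε • (1 : Matrix (Fin n) (Fin n) ℝ)) = Matrix.diagonal (fun _ => ε) := by
      ext i j
      by_cases h : i = j <;> simp [h, Matrix.one_apply]
    have hTpd : T.PosDef := by
      rw [hTdef, hsm]
      exact Matrix.PosDef.posSemidef_add hMid.posSemidef_sqrt (Matrix.posDef_diagonal_iff.mpr fun _ => hε)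
    have hdet : IsUnit T.det := hTpd.det_pos.ne'.isUnit
    have hTT : T * T⁻¹ = 1 := Matrix.mul_nonsing_inv _ hdet
    have hTT' : T⁻¹ * T = 1 := Matrix.nonsing_inv_mul _ hdet
    have hTt : Tᵀ = T := by
      rw [hTdef]
      simp [Matrix.transpose_add, hNt, Matrix.transpose_smul, Matrix.transpose_one]
    have hTit : (T⁻¹)ᵀ = T⁻¹ := by rw [Matrix.transpose_nonsing_inv, hTt]
    set D := Kᵀ - T⁻¹ * (B * A) with hDdef
    have hDt : Dᵀ = K - (B * A)ᵀ * T⁻¹ := by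
      rw [hDdef]
      simp [Matrix.transpose_sub, Matrix.transpose_mul, Matrix.transpose_transpose, hTit]
    have hDpsd : (Dᵀ * T * D).PosSemidef := by
      have := hTpd.posSemidef.conjTranspose_mul_mul_same D
      rwa [Matrix.conjTranspose_eq_transpose_of_trivial] at this
    have hexp : Dᵀ * T * D = K * T * Kᵀ - K * (B * A) - ((B * A)ᵀ * Kᵀ)
        + (B * A)ᵀ * (T⁻¹ * (B * A)) := by
      rw [hDt, hDdef]
      have h1 : (K - (B * A)ᵀ * T⁻¹) * T = K * T - (B * A)ᵀ := by
        rw [Matrix.sub_mul, Matrix.mul_assoc ((B * A)ᵀ), hTT', Matrix.mul_one]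
      have h2 : K * T * (T⁻¹ * (B * A)) = K * (B * A) := by
        rw [Matrix.mul_assoc K T, ← Matrix.mul_assoc T, hTT, Matrix.one_mul]
      calc (K - (B * A)ᵀ * T⁻¹) * T * (Kᵀ - T⁻¹ * (B * A))
          = (K * T - (B * A)ᵀ) * (Kᵀ - T⁻¹ * (B * A)) := by rw [h1]
        _ = K * T * Kᵀ - K * T * (T⁻¹ * (B * A))
            - ((B * A)ᵀ * Kᵀ - (B * A)ᵀ * (T⁻¹ * (B * A))) := by
            rw [Matrix.sub_mul, Matrix.mul_sub, Matrix.mul_sub]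
        _ = K * T * Kᵀ - K * (B * A) - ((B * A)ᵀ * Kᵀ)
            + (B * A)ᵀ * (T⁻¹ * (B * A)) := by rw [h2]; abel
    have htr0 : 0 ≤ (Dᵀ * T * D).trace := psd_trace_nonneg hDpsd
    rw [hexp, Matrix.trace_add, Matrix.trace_sub, Matrix.trace_sub] at htr0
    have htr1 : ((B * A)ᵀ * Kᵀ).trace = (K * (B * A)).trace := by
      rw [← Matrix.transpose_mul, Matrix.trace_transpose]
    have htr2 : (K * T * Kᵀ).trace ≤ T.trace := by
      have hnn := trace_mul_nonneg hcontr hTpd.posSemidef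
      rw [Matrix.sub_mul, Matrix.one_mul, Matrix.trace_sub] at hnn
      have e : (K * T * Kᵀ).trace = (Kᵀ * K * T).trace := by
        rw [Matrix.trace_mul_cycle]
      linarith
    have htr3 : ((B * A)ᵀ * (T⁻¹ * (B * A))).trace ≤ N.trace := by
      have e : ((B * A)ᵀ * (T⁻¹ * (B * A))).trace = (T⁻¹ * ((B * A) * (B * A)ᵀ)).trace := by
        rw [← Matrix.mul_assoc, Matrix.trace_mul_cycle, ← Matrix.mul_assoc,
          Matrix.trace_mul_comm, ← Matrix.mul_assoc]
      rw [e, hZZ, ← hN2]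
      have hNT : N * T = N * N + ε • N := by
        rw [hTdef, Matrix.mul_add, Matrix.mul_smul, Matrix.mul_one]
      have hNN : N * N = N * T - ε • N := by rw [hNT]; abel
      rw [hNN, Matrix.mul_sub, Matrix.trace_sub]
      have e2 : (T⁻¹ * (N * T)).trace = N.trace := by
        rw [← Matrix.mul_assoc, Matrix.trace_mul_cycle, hTT, Matrix.one_mul]
      have e3 : 0 ≤ (T⁻¹ * (ε • N)).trace := by
        rw [Matrix.mul_smul, Matrix.trace_smul, smul_eq_mul]
        exact mul_nonneg hε.le (trace_mul_nonneg hTpd.inv.posSemidef hMid.posSemidef_sqrt)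
      linarith
    have hTtr : T.trace = N.trace + ε * n := by
      rw [hTdef, Matrix.trace_add, Matrix.trace_smul, Matrix.trace_one, smul_eq_mul]
      simp
    have hεn : 0 ≤ ε * n := mul_nonneg hε.le (Nat.cast_nonneg n)
    rw [htrC]
    linarith
  apply le_of_forall_pos_le_add
  intro ε hε
  have hn : (0 : ℝ) < (n : ℝ) + 1 := by positivity
  have h := hmain (ε / ((n : ℝ) + 1)) (by positivity)
  have hle : (ε / ((n : ℝ) + 1)) * n ≤ ε := by
    rw [div_mul_eq_mul_div, div_le_iff₀ hn]
    nlinarith [Nat.cast_nonneg (α := ℝ) n]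
  linarith

open MeasureTheory

lemma integrable_mul_of_memL2 {α : Type*} [MeasurableSpace α] {μ : Measure α} {f g : α → ℝ}
    (hf : MemLp f 2 μ) (hg : MemLp g 2 μ) : Integrable (fun x => f x * g x) μ := by
  have h : MemLp (f • g) 1 μ := hg.smul hf
  rw [← memLp_one_iff_integrable]
  simpa [Pi.smul_apply, smul_eq_mul, Pi.mul_def] using h

lemma integral_sum_mul_sum {α : Type*} [MeasurableSpace α] {μ : Measure α}
    {ι : Type*} [Fintype ι] (u : ι → α → ℝ) (hu : ∀ i, MemLp (u i) 2 μ) :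
    ∫ p, (∑ i, u i p) * (∑ j, u j p) ∂μ = ∑ i, ∑ j, ∫ p, u i p * u j p ∂μ := by
  have hsum : MemLp (fun p => ∑ j, u j p) 2 μ := by
    have := memLp_finset_sum (μ := μ) (f := u) Finset.univ (fun i _ => hu i)
    simpa using this
  calc ∫ p, (∑ i, u i p) * (∑ j, u j p) ∂μ
      = ∫ p, ∑ i, (u i p * ∑ j, u j p) ∂μ := by
        congr 1; funext p; rw [Finset.sum_mul]
    _ = ∑ i, ∫ p, u i p * ∑ j, u j p ∂μ :=
        integral_finset_sum _ (fun i _ => integrable_mul_of_memL2 (hu i) hsum)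
    _ = ∑ i, ∑ j, ∫ p, u i p * u j p ∂μ := by
        refine Finset.sum_congr rfl fun i _ => ?_
        calc ∫ p, u i p * ∑ j, u j p ∂μ = ∫ p, ∑ j, (u i p * u j p) ∂μ := by
              congr 1; funext p; rw [Finset.mul_sum]
          _ = ∑ j, ∫ p, u i p * u j p ∂μ :=
              integral_finset_sum _ (fun j _ => integrable_mul_of_memL2 (hu i) (hu j))

lemma dot_double_sum {m : ℕ} (M : Matrix (Fin m) (Fin m) ℝ) (v w : Fin m → ℝ) :
    v ⬝ᵥ M *ᵥ w = ∑ i, ∑ j, (v i * M i j * w j) := by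
  simp only [dotProduct, Matrix.mulVec, Finset.mul_sum]
  refine Finset.sum_congr rfl fun i _ => Finset.sum_congr rfl fun j _ => by ring

theorem wasserstein2_sq_ge_bures_sq
    {m : ℕ} (P Q : Measure (Fin m → ℝ))
    [IsProbabilityMeasure P] [IsProbabilityMeasure Q]
    (hP2 : ∀ i, MemLp (fun y : Fin m → ℝ => y i) 2 P)
    (hQ2 : ∀ i, MemLp (fun y : Fin m → ℝ => y i) 2 Q)
    (μP μQ : Fin m → ℝ)
    (hμP : ∀ i, μP i = ∫ y : Fin m → ℝ, y i ∂P)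
    (hμQ : ∀ i, μQ i = ∫ y : Fin m → ℝ, y i ∂Q)
    (SP SQ : Matrix (Fin m) (Fin m) ℝ)
    (hSPdef : ∀ i j, SP i j = ∫ y : Fin m → ℝ, (y i - μP i) * (y j - μP j) ∂P)
    (hSQdef : ∀ i j, SQ i j = ∫ y : Fin m → ℝ, (y i - μQ i) * (y j - μQ j) ∂Q)
    (hSP : SP.PosSemidef) (hSQ : SQ.PosSemidef)
    (hMid : (hSQ.sqrt * SP * hSQ.sqrt).PosSemidef) :
    ∑ i, (μP i - μQ i) ^ 2 + (SP + SQ - 2 • hMid.sqrt).trace ≤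
      sInf {x : ℝ | ∃ γ : Measure ((Fin m → ℝ) × (Fin m → ℝ)),
        IsProbabilityMeasure γ ∧ γ.map Prod.fst = P ∧ γ.map Prod.snd = Q ∧
        x = ∫ p, ∑ i, (p.1 i - p.2 i) ^ 2 ∂γ} := by
  apply le_csInf
  · refine ⟨_, P.prod Q, inferInstance, ?_, ?_, rfl⟩
    · simp [Measure.map_fst_prod, measure_univ]
    · simp [Measure.map_snd_prod, measure_univ]
  · rintro x ⟨γ, hγp, h1, h2, rfl⟩
    haveI := hγp
    -- L² membership of coordinates under γ
    have hm1 : ∀ i, MemLp (fun p : (Fin m → ℝ) × (Fin m → ℝ) => p.1 i) 2 γ := by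
      intro i
      have h := hP2 i
      rw [← h1] at h
      exact (memLp_map_measure_iff (measurable_pi_apply i).aestronglyMeasurable
        measurable_fst.aemeasurable).1 h
    have hm2 : ∀ i, MemLp (fun p : (Fin m → ℝ) × (Fin m → ℝ) => p.2 i) 2 γ := by
      intro i
      have h := hQ2 i
      rw [← h2] at h
      exact (memLp_map_measure_iff (measurable_pi_apply i).aestronglyMeasurable
        measurable_snd.aemeasurable).1 h
    set a : Fin m → ((Fin m → ℝ) × (Fin m → ℝ)) → ℝ := fun i p => p.1 i - μP i with hadef
    set b : Fin m → ((Fin m → ℝ) × (Fin m → ℝ)) → ℝ := fun i p => p.2 i - μQ i with hbdef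
    have ha : ∀ i, MemLp (a i) 2 γ := fun i => (hm1 i).sub (memLp_const _)
    have hb : ∀ i, MemLp (b i) 2 γ := fun i => (hm2 i).sub (memLp_const _)
    -- transfer of integrals through the marginal maps
    have key1 : ∀ g : (Fin m → ℝ) → ℝ, Measurable g →
        (∫ y, g y ∂P) = ∫ p, g p.1 ∂γ := by
      intro g hg
      rw [← h1, integral_map measurable_fst.aemeasurable hg.aestronglyMeasurable]
    have key2 : ∀ g : (Fin m → ℝ) → ℝ, Measurable g →
        (∫ y, g y ∂Q) = ∫ p, g p.2 ∂γ := by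
      intro g hg
      rw [← h2, integral_map measurable_snd.aemeasurable hg.aestronglyMeasurable]
    -- centered coordinates have zero mean
    have hza : ∀ i, ∫ p, a i p ∂γ = 0 := by
      intro i
      have hint : ∫ p, (p.1 i : ℝ) ∂γ = μP i := by
        rw [hμP i, key1 (fun y => y i) (measurable_pi_apply i)]
      rw [hadef]
      rw [integral_sub ((hm1 i).integrable one_le_two) (integrable_const _)]
      simp [hint, measure_univ]
    have hzb : ∀ i, ∫ p, b i p ∂γ = 0 := by
      intro i
      have hint : ∫ p, (p.2 i : ℝ) ∂γ = μQ i := by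
        rw [hμQ i, key2 (fun y => y i) (measurable_pi_apply i)]
      rw [hbdef]
      rw [integral_sub ((hm2 i).integrable one_le_two) (integrable_const _)]
      simp [hint, measure_univ]
    -- covariance matrices as integrals over γ
    have hSPγ : ∀ i j, SP i j = ∫ p, a i p * a j p ∂γ := by
      intro i j
      rw [hSPdef i j, key1 (fun y => (y i - μP i) * (y j - μP j))
        (((measurable_pi_apply i).sub measurable_const).mul
          ((measurable_pi_apply j).sub measurable_const))]
    have hSQγ : ∀ i j, SQ i j = ∫ p, b i p * b j p ∂γ := by
      intro i j
      rw [hSQdef i j, key2 (fun y => (y i - μQ i) * (y j - μQ j))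
        (((measurable_pi_apply i).sub measurable_const).mul
          ((measurable_pi_apply j).sub measurable_const))]
    set Cm : Matrix (Fin m) (Fin m) ℝ := Matrix.of fun i j => ∫ p, a i p * b j p ∂γ with hCmdef
    -- the quadratic (block PSD) inequality
    have hq : ∀ x y : Fin m → ℝ, 2 * (x ⬝ᵥ Cm *ᵥ y) ≤ x ⬝ᵥ SP *ᵥ x + y ⬝ᵥ SQ *ᵥ y := by
      intro x y
      set u : (Fin m ⊕ Fin m) → ((Fin m → ℝ) × (Fin m → ℝ)) → ℝ :=
        Sum.elim (fun i p => -x i * a i p) (fun j p => y j * b j p) with hudef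
      have hu : ∀ k, MemLp (u k) 2 γ := by
        rintro (i | j)
        · exact (ha i).const_mul (-x i)
        · exact (hb j).const_mul (y j)
      have hexp := integral_sum_mul_sum u hu
      have hnn : 0 ≤ ∫ p, (∑ k, u k p) * (∑ k, u k p) ∂γ :=
        integral_nonneg fun p => mul_self_nonneg _
      rw [hexp] at hnn
      simp only [hudef, Fintype.sum_sum_type, Sum.elim_inl, Sum.elim_inr] at hnn
      have eaa : ∀ i j : Fin m, (∫ p, (-x i * a i p) * (-x j * a j p) ∂γ)
          = x i * SP i j * x j := by
        intro i j
        rw [hSPγ i j]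
        rw [show (fun p => (-x i * a i p) * (-x j * a j p)) =
          (fun p => (x i * x j) * (a i p * a j p)) from funext fun p => by ring]
        rw [integral_const_mul]
        ring
      have eab : ∀ i j : Fin m, (∫ p, (-x i * a i p) * (y j * b j p) ∂γ)
          = -(x i * Cm i j * y j) := by
        intro i j
        rw [show (fun p => (-x i * a i p) * (y j * b j p)) =
          (fun p => (-(x i * y j)) * (a i p * b j p)) from funext fun p => by ring]
        rw [integral_const_mul]
        simp only [hCmdef, Matrix.of_apply]
        ring
      have eba : ∀ i j : Fin m, (∫ p, (y i * b i p) * (-x j * a j p) ∂γ)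
          = -(x j * Cm j i * y i) := by
        intro i j
        rw [show (fun p => (y i * b i p) * (-x j * a j p)) =
          (fun p => (-(x j * y i)) * (a j p * b i p)) from funext fun p => by ring]
        rw [integral_const_mul]
        simp only [hCmdef, Matrix.of_apply]
        ring
      have ebb : ∀ i j : Fin m, (∫ p, (y i * b i p) * (y j * b j p) ∂γ)
          = y i * SQ i j * y j := by
        intro i j
        rw [hSQγ i j]
        rw [show (fun p => (y i * b i p) * (y j * b j p)) =
          (fun p => (y i * y j) * (b i p * b j p)) from funext fun p => by ring]
        rw [integral_const_mul]
        ring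
      simp only [eaa, eab, eba, ebb, Finset.sum_add_distrib, Finset.sum_neg_distrib] at hnn
      rw [dot_double_sum, dot_double_sum, dot_double_sum]
      have hswap : ∑ i, (∑ j, x i * Cm i j * y j) = ∑ i, ∑ j, x j * Cm j i * y i := by
        rw [Finset.sum_comm]
      linarith [hnn]
    -- cost identity
    have hcost : (∫ p, ∑ i, (p.1 i - p.2 i) ^ 2 ∂γ)
        = ∑ i, (μP i - μQ i) ^ 2 + SP.trace + SQ.trace - 2 * Cm.trace := by
      have hint : ∀ i : Fin m, Integrable (fun p : (Fin m → ℝ) × (Fin m → ℝ) =>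
          (p.1 i - p.2 i) ^ 2) γ := by
        intro i
        have h := integrable_mul_of_memL2 ((hm1 i).sub (hm2 i)) ((hm1 i).sub (hm2 i))
        simpa [pow_two] using h
      rw [integral_finset_sum _ (fun i _ => hint i)]
      have hterm : ∀ i : Fin m, (∫ p, (p.1 i - p.2 i) ^ 2 ∂γ)
          = SP i i + SQ i i + (μP i - μQ i) ^ 2 - 2 * Cm i i := by
        intro i
        have hptw : (fun p : (Fin m → ℝ) × (Fin m → ℝ) => (p.1 i - p.2 i) ^ 2)
            = fun p => (a i p * a i p + b i p * b i p
                + ((μP i - μQ i) ^ 2 - 2 * (a i p * b i p)))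
              + ((2 * (μP i - μQ i)) * a i p - (2 * (μP i - μQ i)) * b i p) := by
          funext p
          simp only [hadef, hbdef]
          ring
        have haa := integrable_mul_of_memL2 (ha i) (ha i)
        have hbb := integrable_mul_of_memL2 (hb i) (hb i)
        have hab := integrable_mul_of_memL2 (ha i) (hb i)
        have ha1 : Integrable (a i) γ := (ha i).integrable one_le_two
        have hb1 : Integrable (b i) γ := (hb i).integrable one_le_two
        have hI3 : Integrable (fun p : (Fin m → ℝ) × (Fin m → ℝ) =>
            (μP i - μQ i) ^ 2 - 2 * (a i p * b i p)) γ :=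
          (integrable_const _).sub (hab.const_mul 2)
        have hI2 : Integrable (fun p : (Fin m → ℝ) × (Fin m → ℝ) =>
            a i p * a i p + b i p * b i p) γ := haa.add hbb
        have hG : Integrable (fun p : (Fin m → ℝ) × (Fin m → ℝ) =>
            a i p * a i p + b i p * b i p + ((μP i - μQ i) ^ 2 - 2 * (a i p * b i p))) γ :=
          hI2.add hI3
        have hH : Integrable (fun p : (Fin m → ℝ) × (Fin m → ℝ) =>
            (2 * (μP i - μQ i)) * a i p - (2 * (μP i - μQ i)) * b i p) γ :=
          (ha1.const_mul _).sub (hb1.const_mul _)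
        rw [hptw,
          integral_add hG hH,
          integral_add hI2 hI3,
          integral_add haa hbb,
          integral_sub (integrable_const _) (hab.const_mul 2),
          integral_sub (ha1.const_mul _) (hb1.const_mul _),
          integral_const_mul, integral_const_mul, integral_const_mul, hza i, hzb i,
          integral_const]
        simp only [measure_univ, probReal_univ, ENNReal.toReal_one, one_smul, mul_zero, sub_zero, add_zero]
        rw [← hSPγ i i, ← hSQγ i i]
        have hC : (∫ p, a i p * b i p ∂γ) = Cm i i := by rw [hCmdef]; rfl
        rw [hC]
        ring
      rw [Finset.sum_congr rfl (fun i _ => hterm i)]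
      rw [Matrix.trace, Matrix.trace, Matrix.trace]
      simp only [Matrix.diag]
      rw [Finset.sum_sub_distrib, Finset.sum_add_distrib, Finset.sum_add_distrib,
        ← Finset.mul_sum]
      ring
    have htr := trace_le_sqrt_trace hSP hSQ hMid hq
    rw [hcost]
    have hTr : (SP + SQ - 2 • hMid.sqrt).trace
        = SP.trace + SQ.trace - 2 * hMid.sqrt.trace := by
      rw [Matrix.trace_sub, Matrix.trace_add, Matrix.trace_smul]
      simp
    rw [hTr]
    linarith
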